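/- Let Γ be a finite tree with at least three vertices and let χ_{iK} be a partial conjugation (v_i a vertex, K a connected component of Γ \ S_i). Then there is exactly one vertex v_ℓ such that v_ℓ is adjacent to v_i and some vertex of K is adjacent to v_ℓ; i.e., every partial conjugation on a tree has a unique link point. -/

import Mathlib

def gstar {V : Type*} (G : SimpleGraph V) (v : V) : Set V := {u | u = v ∨ G.Adj v u}

def glink {V : Type*} (G : SimpleGraph V) (v : V) : Set V := {u | G.Adj v u}

def IsCompOf {V : Type*} (G : SimpleGraph V) (s K : Set V) : Prop :=
  K.Nonempty ∧ K ⊆ s ∧ (G.induce K).Connected ∧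
    ∀ K' : Set V, K ⊆ K' → K' ⊆ s → (G.induce K').Connected → K' = K

lemma boundary_mem_star {V : Type*} (G : SimpleGraph V) (i : V) (K : Set V)
    (hK : IsCompOf G ((gstar G i)ᶜ) K) {x y : V} (hx : x ∈ K) (hadj : G.Adj x y)
    (hy : y ∉ K) : y ∈ gstar G i := by
  by_contra h
  have hconn : (G.induce (K ∪ {x, y})).Connected :=
    SimpleGraph.induce_union_connected hK.2.2.1.preconnected (SimpleGraph.induce_pair_connected_of_adj hadj).preconnected
      ⟨x, hx, by simp⟩
  have heq := hK.2.2.2 (K ∪ {x, y}) (Set.subset_union_left)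
    (by
      intro z hz
      rcases hz with hz | hz
      · exact hK.2.1 hz
      · rcases hz with rfl | hz
        · exact hK.2.1 hx
        · simp only [Set.mem_singleton_iff] at hz; subst hz; exact h) hconn
  exact hy (heq ▸ (by simp : y ∈ K ∪ {x, y}))

lemma exists_link {V : Type*} (G : SimpleGraph V) (i : V) (K : Set V)
    (hK : IsCompOf G ((gstar G i)ᶜ) K) :
    ∀ {x : V} (_ : G.Walk x i), x ∈ K → ∃ ℓ, G.Adj ℓ i ∧ ∃ k ∈ K, G.Adj ℓ k := by
  suffices h : ∀ {x j : V} (_ : G.Walk x j), j = i → x ∈ K →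
      ∃ ℓ, G.Adj ℓ i ∧ ∃ k ∈ K, G.Adj ℓ k by
    intro x w hx; exact h w rfl hx
  intro x j w
  induction w with
  | nil =>
    rintro rfl hx
    exact absurd (hK.2.1 hx) (by simp [gstar])
  | @cons x y jj hadj p ih =>
    rintro rfl hx
    by_cases hy : y ∈ K
    · exact ih rfl hy
    · have hstar := boundary_mem_star G jj K hK hx hadj hy
      rcases hstar with rfl | hiy
      · exact absurd (hK.2.1 hx) (by simp [gstar, hadj.symm])
      · exact ⟨y, hiy.symm, x, hx, hadj.symm⟩

theorem stmt18 {V : Type*} [Fintype V] (G : SimpleGraph V) (ht : G.IsTree)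
    (h3 : 3 ≤ Fintype.card V)
    (i : V) (K : Set V) (hK : IsCompOf G ((gstar G i)ᶜ) K) :
    ∃! ℓ : V, i ∈ glink G ℓ ∧ (K ∩ glink G ℓ).Nonempty := by
  classical
  obtain ⟨k, hk⟩ := hK.1
  obtain ⟨w⟩ := ht.isConnected.preconnected k i
  obtain ⟨ℓ, hℓi, k1, hk1, hℓk1⟩ := exists_link G i K hK w hk
  refine ⟨ℓ, ⟨hℓi, k1, hk1, hℓk1⟩, ?_⟩
  rintro ℓ₂ ⟨hℓ₂i, k2, hk2, hℓ₂k2⟩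
  by_contra hne
  -- build a walk from ℓ₂ to ℓ avoiding i
  have hKconn := hK.2.2.1
  obtain ⟨wk⟩ := hKconn.preconnected ⟨k2, hk2⟩ ⟨k1, hk1⟩
  let f : G.induce K →g G := ⟨Subtype.val, fun h => h⟩
  have hmap : ∀ z ∈ (wk.map f).support, z ∈ K := by
    intro z hz
    rw [SimpleGraph.Walk.support_map] at hz
    obtain ⟨⟨z', hz'⟩, _, rfl⟩ := List.mem_map.mp hz
    exact hz'
  have hiK : i ∉ K := fun h => hK.2.1 h (by simp [gstar])
  let W : G.Walk ℓ₂ ℓ :=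
    SimpleGraph.Walk.cons (show G.Adj ℓ₂ k2 from hℓ₂k2) ((wk.map f).concat hℓk1.symm)
  have hiW : i ∉ W.support := by
    intro h
    simp only [W, SimpleGraph.Walk.support_cons, SimpleGraph.Walk.support_concat,
      List.concat_eq_append, List.mem_cons, List.mem_append, List.mem_singleton] at h
    rcases h with h | h | h
    · exact (SimpleGraph.Adj.ne hℓ₂i) h.symm
    · exact hiK (hmap i h)
    · rcases h with h | h
      · exact (SimpleGraph.Adj.ne' hℓi) h
      · simp at h
  have hiP : i ∉ (W.toPath : G.Walk ℓ₂ ℓ).support :=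
    fun h => hiW (SimpleGraph.Walk.support_toPath_subset W h)
  -- the path ℓ₂ - i - ℓ
  have hP2 : (SimpleGraph.Walk.cons (show G.Adj ℓ₂ i from hℓ₂i) (SimpleGraph.Walk.cons hℓi.symm
      SimpleGraph.Walk.nil) : G.Walk ℓ₂ ℓ).IsPath := by
    rw [SimpleGraph.Walk.cons_isPath_iff]
    constructor
    · rw [SimpleGraph.Walk.cons_isPath_iff]
      exact ⟨SimpleGraph.Walk.IsPath.nil, by simp [hℓi.ne']⟩
    · simp [SimpleGraph.Adj.ne hℓ₂i, hne]
  obtain ⟨p, _, hp⟩ := ht.existsUnique_path ℓ₂ ℓ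
  have h1 := hp _ (W.toPath).isPath
  have h2 := hp _ hP2
  rw [← h2] at h1
  apply hiP
  rw [h1]
  simp
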